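/- Suppose along integral curves $\frac{dx}{dt} = \tau x + x^2 f_1$ with $\frac{d\tau}{dt} = -|\mu|^2 + x g_1$ where $f_1, g_1$ are smooth bounded functions, and $\tau^2 + |\mu|^2 = 1$ on the characteristic set. Then $\frac{d^2x}{dt^2} = (1 - 2|\mu|^2)x + x^2 f_2$ for some bounded smooth $f_2$. In particular, if $|\mu| > 3/4$ and $x$ is sufficiently small, then $\frac{d^2x}{dt^2} \leq -c\, x$ for some $c > 0$; hence at any critical point of $x$ along such a curve ($\frac{dx}{dt} = 0$, so $\tau = O(x)$), $x$ has a strict local maximum. -/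

import Mathlib

open Real Set

private lemma lipLB (f : ℝ → ℝ) (B : ℝ) (hd : Differentiable ℝ f)
    (hb : ∀ t, |deriv f t| ≤ B) :
    ∀ ⦃t s : ℝ⦄, t ≤ s → f t - B * (s - t) ≤ f s := by
  intro t s hts
  have mono : Monotone (fun u => f u + B * u) := by
    have hdd : Differentiable ℝ (fun u => f u + B * u) :=
      hd.add (differentiable_id.const_mul B)
    refine monotone_of_deriv_nonneg hdd ?_
    intro u
    have h1 : HasDerivAt (fun u => f u + B * u) (deriv f u + B) u := by
      simpa using ((hd u).hasDerivAt.fun_add (((hasDerivAt_id u).const_mul B)))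
    rw [h1.deriv]
    linarith [(abs_le.mp (hb u)).1]
  have := mono hts
  simp only at this
  nlinarith [this]

private lemma keyB (x τ f1 : ℝ → ℝ) (B' : ℝ) (hB' : 0 < B')
    (hxpos : ∀ t, 0 < x t) (hxd : Differentiable ℝ x) (hf1d : Differentiable ℝ f1)
    (hf1db : ∀ t, |deriv f1 t| ≤ B')
    (hτ : ∀ t, -1 ≤ τ t)
    (hx' : ∀ t, deriv x t = τ t * x t + x t ^ 2 * f1 t)
    (t₀ : ℝ) (hm : 0 < f1 t₀) :
    x t₀ * f1 t₀ ^ 2 ≤ 12 * B' + 6 * f1 t₀ := by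
  set m := f1 t₀ with hmdef
  set δ := min (m / (2 * B')) 1 with hδdef
  have hδpos : 0 < δ := lt_min (by positivity) one_pos
  have hδ1 : δ ≤ 1 := min_le_right _ _
  have hδm : B' * δ ≤ m / 2 := by
    have h : δ ≤ m / (2 * B') := min_le_left _ _
    calc B' * δ ≤ B' * (m / (2 * B')) := mul_le_mul_of_nonneg_left h hB'.le
      _ = m / 2 := by field_simp
  have hf1lb : ∀ s ∈ Icc t₀ (t₀ + δ), m / 2 ≤ f1 s := by
    intro s hs
    have h1 : f1 t₀ - B' * (s - t₀) ≤ f1 s := lipLB f1 B' hf1d hf1db hs.1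
    have h2 : s - t₀ ≤ δ := by linarith [hs.2]
    nlinarith [hB'.le]
  set H := fun s => Real.exp (-s) * (x s)⁻¹ +
      (m / 2) * (Real.exp (-t₀) - Real.exp (-s)) with hHdef
  have hHderiv : ∀ s, HasDerivAt H
      (-Real.exp (-s) * (x s)⁻¹ + Real.exp (-s) * (-(deriv x s) / (x s) ^ 2)
        + (m / 2) * Real.exp (-s)) s := by
    intro s
    have he : HasDerivAt (fun u => Real.exp (-u)) (-Real.exp (-s)) s := by
      simpa [Function.comp_def] using (Real.hasDerivAt_exp (-s)).comp s ((hasDerivAt_id s).neg)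
    have hy : HasDerivAt (fun u => (x u)⁻¹) (-(deriv x s) / (x s) ^ 2) s :=
      ((hxd s).hasDerivAt).inv (hxpos s).ne'
    have h1 := he.mul hy
    have h2 : HasDerivAt (fun u => (m / 2) * (Real.exp (-t₀) - Real.exp (-u)))
        ((m / 2) * Real.exp (-s)) s := by
      have := ((hasDerivAt_const s (Real.exp (-t₀))).sub he).const_mul (m / 2)
      simpa using this
    exact (he.fun_mul hy).fun_add h2
  have hHdiff : Differentiable ℝ H := fun s => (hHderiv s).differentiableAt
  have hHanti : AntitoneOn H (Icc t₀ (t₀ + δ)) := by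
    apply antitoneOn_of_deriv_nonpos (convex_Icc _ _) hHdiff.continuous.continuousOn
      hHdiff.differentiableOn
    intro s hs
    rw [interior_Icc] at hs
    rw [(hHderiv s).deriv, hx' s]
    have hxs := hxpos s
    have hfs : m / 2 ≤ f1 s := hf1lb s ⟨hs.1.le, hs.2.le⟩
    have hτs := hτ s
    have hkey : -(τ s * x s + x s ^ 2 * f1 s) / (x s) ^ 2 = -(τ s) * (x s)⁻¹ - f1 s := by
      field_simp
      ring
    rw [hkey]
    have hE := Real.exp_pos (-s)
    have h1 : 0 ≤ (1 + τ s) * (x s)⁻¹ := mul_nonneg (by linarith) (inv_pos.mpr hxs).le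
    nlinarith [mul_nonneg hE.le h1, mul_nonneg hE.le (by linarith : (0:ℝ) ≤ f1 s - m / 2)]
  have hmain : H (t₀ + δ) ≤ H t₀ :=
    hHanti (left_mem_Icc.mpr (by linarith)) (right_mem_Icc.mpr (by linarith)) (by linarith)
  have hx0 := hxpos t₀
  have hxδ := hxpos (t₀ + δ)
  have hEt := Real.exp_pos (-t₀)
  have hexpadd : Real.exp (-(t₀ + δ)) = Real.exp (-t₀) * Real.exp (-δ) := by
    rw [← Real.exp_add]; ring_nf
  -- from hmain : drop positive term
  have h3 : (m / 2) * (Real.exp (-t₀) - Real.exp (-(t₀ + δ))) ≤ Real.exp (-t₀) * (x t₀)⁻¹ := by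
    have hpos : 0 < Real.exp (-(t₀ + δ)) * (x (t₀ + δ))⁻¹ :=
      mul_pos (Real.exp_pos _) (inv_pos.mpr hxδ)
    simp only [hHdef] at hmain
    linarith
  have h4 : (m / 2) * (1 - Real.exp (-δ)) ≤ (x t₀)⁻¹ := by
    rw [hexpadd] at h3
    have := h3
    nlinarith [inv_pos.mpr hx0, hEt]
  -- 1 - exp(-δ) ≥ δ/3
  have h5 : δ / 3 ≤ 1 - Real.exp (-δ) := by
    have ha : 1 + δ ≤ Real.exp δ := by linarith [Real.add_one_le_exp δ]
    have hb : Real.exp δ ≤ Real.exp 1 := Real.exp_le_exp.mpr hδ1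
    have hc : Real.exp 1 < 3 := by
      have := Real.exp_one_lt_d9
      linarith
    have hd : Real.exp (-δ) = (Real.exp δ)⁻¹ := by rw [Real.exp_neg]
    rw [hd]
    have hEδ : 0 < Real.exp δ := Real.exp_pos δ
    rw [div_le_iff₀ (by norm_num : (0:ℝ) < 3)] at *
    have : (Real.exp δ)⁻¹ * Real.exp δ = 1 := inv_mul_cancel₀ hEδ.ne'
    nlinarith
  -- x₀ * m * δ ≤ 6
  have h6 : x t₀ * m * δ ≤ 6 := by
    have := mul_le_mul_of_nonneg_left h4 hx0.le
    rw [mul_inv_cancel₀ hx0.ne'] at this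
    nlinarith
  -- m ≤ (2B' + m) * δ
  have h7 : m ≤ (2 * B' + m) * δ := by
    rcases min_choice (m / (2 * B')) 1 with h | h
    · have hδeq : δ = m / (2 * B') := by rw [hδdef, h]
      rw [hδeq]
      have heq : (2 * B' + m) * (m / (2 * B')) = m + m * (m / (2 * B')) := by
        field_simp
      rw [heq]
      nlinarith [div_pos hm (by linarith : (0:ℝ) < 2 * B')]
    · have hδeq : δ = 1 := by rw [hδdef, h]
      rw [hδeq]
      nlinarith
  nlinarith [mul_le_mul_of_nonneg_left h7 (mul_nonneg hx0.le hm.le), hδpos]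


private lemma keyB2 (x τ f1 : ℝ → ℝ) (B B' : ℝ) (hB' : 0 < B')
    (hxpos : ∀ t, 0 < x t) (hxd : Differentiable ℝ x) (hf1d : Differentiable ℝ f1)
    (hf1b : ∀ t, |f1 t| ≤ B)
    (hf1db : ∀ t, |deriv f1 t| ≤ B')
    (hτ : ∀ t, |τ t| ≤ 1)
    (hx' : ∀ t, deriv x t = τ t * x t + x t ^ 2 * f1 t)
    (t₀ : ℝ) :
    x t₀ * f1 t₀ ^ 2 ≤ 12 * B' + 6 * B := by
  have hB : |f1 t₀| ≤ B := hf1b t₀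
  rcases lt_trichotomy (f1 t₀) 0 with hm | hm | hm
  · -- reflect
    set X := fun s => x (2 * t₀ - s) with hX
    set T := fun s => -τ (2 * t₀ - s) with hT
    set F := fun s => -f1 (2 * t₀ - s) with hF
    have hsub : Differentiable ℝ (fun s : ℝ => 2 * t₀ - s) :=
      (differentiable_const _).sub differentiable_id
    have hXd : Differentiable ℝ X := hxd.comp hsub
    have hFd : Differentiable ℝ F := (hf1d.comp hsub).neg
    have hX' : ∀ s, deriv X s = T s * X s + X s ^ 2 * F s := by
      intro s
      have h1 : deriv X s = -deriv x (2 * t₀ - s) := deriv_comp_const_sub x (2 * t₀) s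
      rw [h1, hx']
      simp only [hT, hF, hX]
      ring
    have hF' : ∀ s, |deriv F s| ≤ B' := by
      intro s
      have h1 : deriv (fun u => f1 (2 * t₀ - u)) s = -deriv f1 (2 * t₀ - s) :=
        deriv_comp_const_sub f1 (2 * t₀) s
      have h2 : deriv F s = deriv f1 (2 * t₀ - s) := by
        have : deriv F s = -deriv (fun u => f1 (2 * t₀ - u)) s := by
          simp only [hF]
          rw [deriv.fun_neg]
        rw [this, h1, neg_neg]
      rw [h2]; exact hf1db _
    have hTlb : ∀ s, -1 ≤ T s := by
      intro s
      have := abs_le.mp (hτ (2 * t₀ - s))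
      simp only [hT]
      linarith [this.2]
    have hFm : 0 < F t₀ := by
      simp only [hF]
      have : (2 * t₀ - t₀) = t₀ := by ring
      rw [this]; linarith
    have := keyB X T F B' hB' (fun s => hxpos _) hXd hFd hF' hTlb hX' t₀ hFm
    have he : (2 * t₀ - t₀) = t₀ := by ring
    simp only [hX, hF, he] at this
    have habs : -f1 t₀ ≤ B := by rw [abs_of_neg hm] at hB; linarith
    nlinarith
  · rw [hm]; norm_num
    nlinarith [hB' , abs_nonneg (f1 t₀), hB]
  · have := keyB x τ f1 B' hB' hxpos hxd hf1d hf1db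
      (fun t => (abs_le.mp (hτ t)).1) hx' t₀ hm
    have : f1 t₀ ≤ B := by rw [abs_of_pos hm] at hB; linarith
    nlinarith [keyB x τ f1 B' hB' hxpos hxd hf1d hf1db
      (fun t => (abs_le.mp (hτ t)).1) hx' t₀ hm]


theorem stmt19 (x τ μ f1 g1 : ℝ → ℝ)
    (hxpos : ∀ t, 0 < x t)
    (hxsm : ContDiff ℝ 2 x) (hτd : Differentiable ℝ τ) (hf1d : Differentiable ℝ f1)
    (hf1b : ∃ B : ℝ, ∀ t, |f1 t| ≤ B) (hf1db : ∃ B : ℝ, ∀ t, |deriv f1 t| ≤ B)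
    (hg1b : ∃ B : ℝ, ∀ t, |g1 t| ≤ B)
    (hx' : ∀ t, deriv x t = τ t * x t + (x t) ^ 2 * f1 t)
    (hτ' : ∀ t, deriv τ t = -(μ t) ^ 2 + x t * g1 t)
    (hchar : ∀ t, (τ t) ^ 2 + (μ t) ^ 2 = 1) :
    (∃ f2 : ℝ → ℝ, (∃ B : ℝ, ∀ t, |f2 t| ≤ B)
        ∧ ∀ t, deriv (deriv x) t = (1 - 2 * (μ t) ^ 2) * x t + (x t) ^ 2 * f2 t)
    ∧ (∃ c x0 : ℝ, 0 < c ∧ 0 < x0 ∧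
        ∀ t, 3 / 4 < |μ t| → x t < x0 →
          deriv (deriv x) t ≤ -c * x t
          ∧ (deriv x t = 0 → τ t = -(x t) * f1 t)
          ∧ (deriv x t = 0 → ∃ δ : ℝ, 0 < δ ∧ ∀ s, s ≠ t → |s - t| < δ → x s < x t)) := by
  obtain ⟨B0, hB0⟩ := hf1b
  obtain ⟨B'0, hB'0⟩ := hf1db
  obtain ⟨Bg0, hBg0⟩ := hg1b
  set B := max B0 0 with hBdef
  set B' := max B'0 1 with hB'def
  set Bg := max Bg0 0 with hBgdef
  have hB : ∀ t, |f1 t| ≤ B := fun t => (hB0 t).trans (le_max_left _ _)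
  have hB' : ∀ t, |deriv f1 t| ≤ B' := fun t => (hB'0 t).trans (le_max_left _ _)
  have hBg : ∀ t, |g1 t| ≤ Bg := fun t => (hBg0 t).trans (le_max_left _ _)
  have hBnn : 0 ≤ B := le_max_right _ _
  have hB'pos : (0:ℝ) < B' := lt_of_lt_of_le one_pos (le_max_right _ _)
  have hBgnn : 0 ≤ Bg := le_max_right _ _
  have hxd : Differentiable ℝ x := hxsm.differentiable (by norm_num)
  have hτb : ∀ t, |τ t| ≤ 1 := by
    intro t
    have h := hchar t
    have := sq_nonneg (μ t)
    rw [abs_le]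
    constructor <;> nlinarith [sq_nonneg (τ t + 1), sq_nonneg (τ t - 1)]
  -- bound on x f1^2
  have hxf : ∀ t, x t * f1 t ^ 2 ≤ 12 * B' + 6 * B :=
    keyB2 x τ f1 B B' hB'pos hxpos hxd hf1d hB hB' hτb hx'
  set C := 12 * B' + 6 * B with hCdef
  have hCpos : 0 < C := by positivity
  -- define f2
  set f2 := fun t => g1 t + 3 * τ t * f1 t + deriv f1 t + 2 * x t * f1 t ^ 2 with hf2def
  set M := Bg + 3 * B + B' + 2 * C with hMdef
  have hMpos : 0 < M := by positivity
  have hf2b : ∀ t, |f2 t| ≤ M := by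
    intro t
    have h1 := abs_le.mp (hBg t)
    have h2 := abs_le.mp (hB' t)
    have h3 : |τ t * f1 t| ≤ 1 * B := by
      rw [abs_mul]; exact mul_le_mul (hτb t) (hB t) (abs_nonneg _) zero_le_one
    have h3' := abs_le.mp h3
    have h4 : 0 ≤ x t * f1 t ^ 2 := mul_nonneg (hxpos t).le (sq_nonneg _)
    have h5 := hxf t
    simp only [hf2def, hMdef]
    rw [abs_le]
    constructor <;> nlinarith
  clear_value B B' Bg C f2 M
  -- the second derivative formula
  have hx2 : ∀ t, deriv (deriv x) t = (1 - 2 * (μ t) ^ 2) * x t + (x t) ^ 2 * f2 t := by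
    intro t
    have hder : HasDerivAt (fun s => τ s * x s + x s ^ 2 * f1 s)
        ((deriv τ t * x t + τ t * deriv x t) +
          ((2 * x t ^ 1 * deriv x t) * f1 t + x t ^ 2 * deriv f1 t)) t := by
      exact ((hτd t).hasDerivAt.mul (hxd t).hasDerivAt).add
        ((((hxd t).hasDerivAt.pow 2)).mul (hf1d t).hasDerivAt)
    have heq : deriv x = fun s => τ s * x s + x s ^ 2 * f1 s := funext hx'
    rw [heq]
    rw [hder.deriv, hτ' t, hx' t]
    simp only [hf2def, pow_one]
    linear_combination (x t) * (hchar t)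
  refine ⟨⟨f2, ⟨M, hf2b⟩, hx2⟩, ?_⟩
  -- second part
  refine ⟨1/16, 1/(16*M), by norm_num, by positivity, ?_⟩
  intro t hμ hx0
  have hμ2 : 9/16 < (μ t)^2 := by
    have := abs_nonneg (μ t)
    nlinarith [sq_abs (μ t)]
  have hxt := hxpos t
  have hcc : deriv (deriv x) t ≤ -(1/16) * x t := by
    rw [hx2 t]
    have hf2t := abs_le.mp (hf2b t)
    have hxM : x t * M < 1/16 := by
      have := mul_lt_mul_of_pos_right hx0 hMpos
      calc x t * M < 1/(16*M) * M := this
        _ = 1/16 := by field_simp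
    have e1 : x t ^ 2 * f2 t ≤ x t * (x t * M) := by
      nlinarith [mul_le_mul_of_nonneg_left hf2t.2 (mul_pos hxt hxt).le]
    have e2 : x t * (x t * M) ≤ x t * (1/16) := mul_le_mul_of_nonneg_left hxM.le hxt.le
    have e3 : (1 - 2 * μ t ^ 2) * x t ≤ -(1/8) * x t := by
      nlinarith [mul_lt_mul_of_pos_right hμ2 hxt]
    linarith
  have hcd1 : ContDiff ℝ 1 (deriv x) := by
    have h2 : ContDiff ℝ ((1:WithTop ℕ∞) + 1) x := by
      rw [(by norm_num : ((1:WithTop ℕ∞) + 1) = 2)]; exact hxsm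
    exact (contDiff_succ_iff_deriv.mp h2).2.2
  have hdxc : Continuous (deriv x) := (hcd1.differentiable one_ne_zero).continuous
  refine ⟨hcc, ?_, ?_⟩
  · intro hcrit
    have h := hx' t
    rw [hcrit] at h
    have h2 : (τ t + x t * f1 t) * x t = 0 := by nlinarith
    rcases mul_eq_zero.mp h2 with h3 | h3
    · linarith
    · exact absurd h3 hxt.ne'
  · intro hcrit
    -- continuity of second derivative
    have hcont : Continuous (deriv (deriv x)) := hcd1.continuous_deriv le_rfl
    have hneg : deriv (deriv x) t < 0 := lt_of_le_of_lt hcc (by linarith [hxt])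
    have hev : ∀ᶠ s in nhds t, deriv (deriv x) s < 0 :=
      hcont.continuousAt.eventually_lt continuousAt_const hneg
    obtain ⟨ε, hε, hball⟩ := Metric.eventually_nhds_iff.mp hev
    set δ := ε/2 with hδdef
    have hδpos : 0 < δ := by positivity
    clear_value δ
    have hball' : ∀ s, |s - t| ≤ δ → deriv (deriv x) s < 0 := by
      intro s hs
      apply hball
      rw [Real.dist_eq]
      linarith
    clear hball hδdef hε hcc hx2 hf2b hxf hx' hτ' hchar hB0 hB'0 hBg0 hB hB' hBg
    clear hμ hx0 hμ2 hBnn hB'pos hBgnn hτb hCpos hMpos hf2def hτd hf1d hxsm hxpos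
    clear hBdef hB'def hBgdef hCdef hMdef
    clear f2 M C B B' Bg g1 μ f1 τ ε
    have hanti : StrictAntiOn (deriv x) (Icc (t - δ) (t + δ)) := by
      apply strictAntiOn_of_deriv_neg (convex_Icc _ _)
      · exact hdxc.continuousOn
      · intro s hs
        rw [interior_Icc] at hs
        apply hball'
        rw [abs_le]
        constructor <;> [linarith [hs.1]; linarith [hs.2]]
    have htmem : t ∈ Icc (t - δ) (t + δ) := Set.mem_Icc.mpr ⟨by linarith, by linarith⟩
    have hmono1 : StrictMonoOn x (Icc (t - δ) t) := by
      apply strictMonoOn_of_deriv_pos (convex_Icc _ _) hxd.continuous.continuousOn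
      intro s hs
      rw [interior_Icc] at hs
      have hsm : s ∈ Icc (t - δ) (t + δ) := Set.mem_Icc.mpr ⟨hs.1.le, by linarith [hs.2]⟩
      have := hanti hsm htmem hs.2
      rw [hcrit] at this
      exact this
    have hanti2 : StrictAntiOn x (Icc t (t + δ)) := by
      apply strictAntiOn_of_deriv_neg (convex_Icc _ _) hxd.continuous.continuousOn
      intro s hs
      rw [interior_Icc] at hs
      have hsm : s ∈ Icc (t - δ) (t + δ) := Set.mem_Icc.mpr ⟨by linarith [hs.1], hs.2.le⟩
      have := hanti htmem hsm hs.1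
      rw [hcrit] at this
      exact this
    refine ⟨δ, hδpos, ?_⟩
    intro s hst habs
    have habs' := abs_lt.mp habs
    rcases lt_or_gt_of_ne hst with h | h
    · exact hmono1 (Set.mem_Icc.mpr ⟨by linarith [habs'.1], h.le⟩)
        (Set.mem_Icc.mpr ⟨by linarith, le_refl t⟩) h
    · exact hanti2 (Set.mem_Icc.mpr ⟨le_refl t, by linarith⟩)
        (Set.mem_Icc.mpr ⟨h.le, by linarith [habs'.2]⟩) h
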